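/- The 9×9 matrix T̂ with entries T̂_{(i,j)}^{(k,l)} = δ_{i−j,k−l} + 3δ_{i,j,k,l} − 2δ_{i,k}δ_{j,l} (indices in ℤ₃, where δ_{i,j,k,l} = 1 iff i=j=k=l) is a Schur idempotent with respect to the Schur product of M₃(ℂ) with its normalized trace δ-form, is self-adjoint, satisfies T̂ ⋆ id = 0 (irreflexive), and is strongly regular: T̂² = T̂ + 2T̂^c + 4·id where T̂^c = Ĵ − id − T̂. -/

import Mathlib

open Finset Matrix

/-- The Schur/convolution product of endomorphisms of `(M₃, tr)`, expressed in
the orthonormal basis `u_{ij} = √3·e_{ij}` (indexed by `ZMod 3 × ZMod 3`):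
`(S ⋆ T)_{(c,f),(a,b)} = (1/3)·∑_{k,d} S_{(c,d),(a,k)}·T_{(d,f),(k,b)}`. -/
noncomputable def schurM3
    (S T : Matrix (ZMod 3 × ZMod 3) (ZMod 3 × ZMod 3) ℂ) :
    Matrix (ZMod 3 × ZMod 3) (ZMod 3 × ZMod 3) ℂ :=
  Matrix.of fun p q =>
    (1 / 3 : ℂ) * ∑ k : ZMod 3, ∑ d : ZMod 3,
      S (p.1, d) (q.1, k) * T (d, p.2) (k, q.2)

/-- Integer model of `T̂`. -/
def Tz : Matrix (ZMod 3 × ZMod 3) (ZMod 3 × ZMod 3) ℤ :=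
  Matrix.of fun p q =>
    (if p.1 - p.2 = q.1 - q.2 then (1 : ℤ) else 0)
      + (if p.1 = p.2 ∧ p.2 = q.1 ∧ q.1 = q.2 then (3 : ℤ) else 0)
      - (if p.1 = q.1 ∧ p.2 = q.2 then (2 : ℤ) else 0)

/-- Integer model of `Ĵ`. -/
def Jz : Matrix (ZMod 3 × ZMod 3) (ZMod 3 × ZMod 3) ℤ :=
  Matrix.of fun p q => if p.1 = p.2 ∧ q.1 = q.2 then (3 : ℤ) else 0

lemma key1 : ∀ p q : ZMod 3 × ZMod 3,
    (∑ k : ZMod 3, ∑ d : ZMod 3, Tz (p.1, d) (q.1, k) * Tz (d, p.2) (k, q.2))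
      = 3 * Tz p q := by decide

lemma key2 : ∀ p q : ZMod 3 × ZMod 3, Tz q p = Tz p q := by
  have h : ∀ p q : ZMod 3 × ZMod 3, Tz q p - Tz p q = 0 := by decide
  intro p q; exact sub_eq_zero.mp (h p q)

lemma key3 : ∀ p q : ZMod 3 × ZMod 3,
    (∑ k : ZMod 3, ∑ d : ZMod 3,
      Tz (p.1, d) (q.1, k) * (if d = k ∧ p.2 = q.2 then (1 : ℤ) else 0)) = 0 := by decide

lemma key4 : ∀ p q : ZMod 3 × ZMod 3,
    (∑ r : ZMod 3 × ZMod 3, Tz p r * Tz r q)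
      = Tz p q + 2 * (Jz p q - (if p = q then 1 else 0) - Tz p q)
        + 4 * (if p = q then 1 else 0) := by decide

/-- The 9×9 matrix `T̂` with entries
`T̂_{(i,j)}^{(k,l)} = δ_{i−j,k−l} + 3δ_{i,j,k,l} − 2δ_{i,k}δ_{j,l}` (indices in
`ℤ₃`) is a Schur idempotent for the normalized-trace δ-form on `M₃(ℂ)`, is
self-adjoint, irreflexive (`T̂ ⋆ id = 0`), and strongly regular:
`T̂² = T̂ + 2·T̂ᶜ + 4·id` with `T̂ᶜ = Ĵ − id − T̂`. -/
theorem stmt_17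
    (T J : Matrix (ZMod 3 × ZMod 3) (ZMod 3 × ZMod 3) ℂ)
    (hT : T = Matrix.of fun p q =>
      (if p.1 - p.2 = q.1 - q.2 then (1 : ℂ) else 0)
        + (if p.1 = p.2 ∧ p.2 = q.1 ∧ q.1 = q.2 then (3 : ℂ) else 0)
        - (if p.1 = q.1 ∧ p.2 = q.2 then (2 : ℂ) else 0))
    (hJ : J = Matrix.of fun p q =>
      if p.1 = p.2 ∧ q.1 = q.2 then (3 : ℂ) else 0) :
    schurM3 T T = T
    ∧ T.conjTranspose = T
    ∧ schurM3 T 1 = 0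
    ∧ T * T = T + 2 • (J - 1 - T) + 4 • (1 : Matrix (ZMod 3 × ZMod 3) (ZMod 3 × ZMod 3) ℂ) := by
  have hTc : ∀ p q : ZMod 3 × ZMod 3, T p q = ((Tz p q : ℤ) : ℂ) := by
    intro p q
    rw [hT]
    simp only [Matrix.of_apply, Tz]
    split_ifs <;> norm_num
  have hJc : ∀ p q : ZMod 3 × ZMod 3, J p q = ((Jz p q : ℤ) : ℂ) := by
    intro p q
    rw [hJ]
    simp only [Matrix.of_apply, Jz]
    split_ifs <;> norm_num
  refine ⟨?_, ?_, ?_, ?_⟩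
  · ext p q
    simp only [schurM3, Matrix.of_apply, hTc]
    have h := key1 p q
    have : (∑ k : ZMod 3, ∑ d : ZMod 3,
        ((Tz (p.1, d) (q.1, k) : ℤ) : ℂ) * ((Tz (d, p.2) (k, q.2) : ℤ) : ℂ))
        = ((3 * Tz p q : ℤ) : ℂ) := by
      rw [← h]; push_cast; ring
    rw [this]; push_cast; ring
  · ext p q
    simp only [Matrix.conjTranspose_apply, hTc, key2 q p]
    simp [← Complex.ofReal_intCast]
  · ext p q
    simp only [schurM3, Matrix.of_apply, Matrix.zero_apply, hTc]
    have h := key3 p q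
    have hone : ∀ d k : ZMod 3,
        (1 : Matrix (ZMod 3 × ZMod 3) (ZMod 3 × ZMod 3) ℂ) (d, p.2) (k, q.2)
          = (((if d = k ∧ p.2 = q.2 then (1 : ℤ) else 0) : ℤ) : ℂ) := by
      intro d k
      simp only [Matrix.one_apply, Prod.mk.injEq]
      split_ifs <;> norm_num
    simp only [hone]
    have : (∑ k : ZMod 3, ∑ d : ZMod 3,
        ((Tz (p.1, d) (q.1, k) : ℤ) : ℂ) * (((if d = k ∧ p.2 = q.2 then (1 : ℤ) else 0) : ℤ) : ℂ))
        = ((0 : ℤ) : ℂ) := by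
      exact_mod_cast h
    rw [this]; push_cast; ring
  · ext p q
    have h := key4 p q
    simp only [Matrix.mul_apply, Matrix.add_apply, Matrix.smul_apply, Matrix.sub_apply,
      Matrix.one_apply, hTc, hJc, smul_eq_mul]
    have : (∑ r : ZMod 3 × ZMod 3, ((Tz p r : ℤ) : ℂ) * ((Tz r q : ℤ) : ℂ))
        = (((Tz p q + 2 * (Jz p q - (if p = q then 1 else 0) - Tz p q)
            + 4 * (if p = q then 1 else 0) : ℤ)) : ℂ) := by
      rw [← h]; push_cast; ring
    rw [this]
    push_cast [apply_ite (fun n : ℤ => (n : ℂ))]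
    ring
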